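/- Let U be a finite set and 𝒩 ⊆ 2^U a nested family closed under complementation (for all X,Y ∈ 𝒩, X ⊆ Y or X ⊆ U∖Y or U∖X ⊆ Y or U∖X ⊆ U∖Y; and U∖X ∈ 𝒩 whenever X ∈ 𝒩). Then there exists a tree decomposition (T, β) of U, i.e., a tree T and β : V(T) → 2^U with the sets β(t) pairwise disjoint and their union equal to U, such that 𝒩 = {β̃(s,t) : st ∈ E(T)}, where β̃(s,t) is the union of β(t') over all nodes t' in the component of T − st containing t. -/

import Mathlib

/-- `κ` is symmetric. -/
def SymmetricFn {α : Type*} (κ : Set α → ℕ) : Prop := ∀ X : Set α, κ Xᶜ = κ X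

/-- `κ` is submodular. -/
def Submodular {α : Type*} (κ : Set α → ℕ) : Prop :=
  ∀ X Y : Set α, κ (X ∩ Y) + κ (X ∪ Y) ≤ κ X + κ Y

/-- A connectivity function: symmetric, submodular, and zero on the empty set. -/
def ConnFn {α : Type*} (κ : Set α → ℕ) : Prop :=
  SymmetricFn κ ∧ Submodular κ ∧ κ ∅ = 0

/-- The union of the bags over the connected component of `t` in `T` minus edge `st`
(i.e. the set β̃(s,t) of a tree decomposition). -/
def tset {V U : Type*} (T : SimpleGraph V) (β : V → Set U) (a b : V) : Set U :=
  ⋃ x ∈ {x : V | (T.deleteEdges {s(a, b)}).Reachable b x}, β x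

open Set


namespace NTD

variable {U : Type*}

/-- A consistent orientation of the nested family `N`. -/
def IsOrient (N : Set (Set U)) (O : Set (Set U)) : Prop :=
  O ⊆ N ∧ (∀ X ∈ N, (X ∈ O ↔ Xᶜ ∉ O)) ∧ (∀ A ∈ O, ∀ Z ∈ N, A ⊆ Z → Z ∈ O)

variable {N : Set (Set U)}

lemma IsOrient.not_both {O : Set (Set U)} (hO : IsOrient N O) {Z : Set U}
    (hZ : Z ∈ O) : Zᶜ ∉ O :=
  (hO.2.1 Z (hO.1 hZ)).mp hZ

lemma IsOrient.mem_or {O : Set (Set U)} (hO : IsOrient N O) {Z : Set U}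
    (hZ : Z ∈ N) : Z ∈ O ∨ Zᶜ ∈ O := by
  by_cases h : Z ∈ O
  · exact Or.inl h
  · exact Or.inr (by_contra fun h' => h ((hO.2.1 Z hZ).mpr h'))

lemma IsOrient.compl_not_mem {O : Set (Set U)} (hO : IsOrient N O) {Z : Set U}
    (hZ : Z ∈ N) (h : Z ∉ O) : Zᶜ ∈ O :=
  (hO.mem_or hZ).resolve_left h

lemma IsOrient.ne_compl {O : Set (Set U)} (hO : IsOrient N O) {Z : Set U}
    (hZ : Z ∈ O) : Z ≠ Zᶜ := by
  intro h
  exact hO.not_both hZ (h ▸ hZ)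

lemma IsOrient.no_opp (hc : ∀ X ∈ N, Xᶜ ∈ N) {O : Set (Set U)} (hO : IsOrient N O)
    {A B : Set U} (hA : A ∈ O) (hB : B ∈ O) : ¬ A ⊆ Bᶜ := fun h =>
  hO.not_both hB (hO.2.2 A hA Bᶜ (hc B (hO.1 hB)) h)

lemma ptOrient (hc : ∀ X ∈ N, Xᶜ ∈ N) (u : U) : IsOrient N {X | X ∈ N ∧ u ∈ X} := by
  refine ⟨fun X hX => hX.1, fun X hX => ?_, fun A hA Z hZ hAZ => ⟨hZ, hAZ hA.2⟩⟩
  constructor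
  · rintro ⟨-, hu⟩ ⟨-, hu'⟩; exact hu' hu
  · intro h
    refine ⟨hX, by_contra fun hu => h ⟨hc X hX, hu⟩⟩

lemma IsOrient.eq_of_subset {O O' : Set (Set U)} (hO : IsOrient N O)
    (hO' : IsOrient N O') (h : O ⊆ O') : O = O' := by
  refine Set.Subset.antisymm h fun Z hZ => ?_
  rcases hO.mem_or (hO'.1 hZ) with h1 | h1
  · exact h1
  · exact absurd (h h1) (hO'.not_both hZ)

/-- Vertices of the structure tree: consistent orientations of `N`. -/
def OV (N : Set (Set U)) : Type _ := {O : Set (Set U) // IsOrient N O}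

/-- `b` is obtained from `a` by swapping the pair `{X, Xᶜ}`. -/
def Adjvia (a b : OV N) (X : Set U) : Prop :=
  X ∈ a.val ∧ b.val = insert Xᶜ (a.val \ {X})

lemma Adjvia.not_mem {a b : OV N} {X : Set U} (h : Adjvia a b X) : X ∉ b.val := by
  rw [h.2]
  rintro (h' | ⟨-, h'⟩)
  · exact a.2.ne_compl h.1 h'
  · exact h' rfl

lemma Adjvia.compl_mem {a b : OV N} {X : Set U} (h : Adjvia a b X) : Xᶜ ∈ b.val := by
  rw [h.2]; exact mem_insert _ _

lemma Adjvia.compl_not_mem_left {a b : OV N} {X : Set U} (h : Adjvia a b X) :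
    Xᶜ ∉ a.val := a.2.not_both h.1

lemma Adjvia.symm {a b : OV N} {X : Set U} (h : Adjvia a b X) : Adjvia b a Xᶜ := by
  refine ⟨h.compl_mem, ?_⟩
  rw [compl_compl, h.2, Set.insert_diff_self_of_notMem, Set.insert_diff_singleton,
    Set.insert_eq_self.mpr h.1]
  exact fun hmem => h.compl_not_mem_left hmem.1

lemma Adjvia.ne {a b : OV N} {X : Set U} (h : Adjvia a b X) : a ≠ b := by
  intro he
  exact h.not_mem (he ▸ h.1)

lemma Adjvia.mem_iff {a b : OV N} {X : Set U} (h : Adjvia a b X) {Z : Set U}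
    (h1 : Z ≠ X) (h2 : Z ≠ Xᶜ) : (Z ∈ a.val ↔ Z ∈ b.val) := by
  rw [h.2]
  simp only [Set.mem_insert_iff, Set.mem_diff, Set.mem_singleton_iff]
  constructor
  · intro hZ; exact Or.inr ⟨hZ, h1⟩
  · rintro (rfl | ⟨hZ, -⟩)
    · exact absurd rfl h2
    · exact hZ

/-- The structure tree on the orientations. -/
def TT (N : Set (Set U)) : SimpleGraph (OV N) where
  Adj a b := ∃ X, Adjvia a b X
  symm := ⟨by rintro a b ⟨X, h⟩; exact ⟨Xᶜ, h.symm⟩⟩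
  loopless := ⟨by rintro a ⟨X, h⟩; exact h.ne rfl⟩

/-- Along an edge swapping `X`, `X` is a minimal element of the source. -/
lemma Adjvia.minimal (hc : ∀ X ∈ N, Xᶜ ∈ N) {a b : OV N} {X : Set U} (h : Adjvia a b X) :
    ∀ A ∈ a.val, A ⊆ X → A = X := by
  intro A hA hAX
  by_contra hne
  have hAb : A ∈ b.val := by
    rw [h.2]; exact Or.inr ⟨hA, hne⟩
  have := b.2.no_opp hc hAb h.compl_mem
  rw [compl_compl] at this
  exact this hAX

lemma mem_insert_diff_iff {O : Set (Set U)} {X : Set U} (Z : Set U) :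
    Z ∈ insert Xᶜ (O \ {X}) ↔ (Z = Xᶜ ∨ (Z ∈ O ∧ Z ≠ X)) := by
  simp [Set.mem_insert_iff, Set.mem_diff]

/-- Swapping a minimal element of an orientation yields an orientation. -/
lemma swapOrient (hc : ∀ X ∈ N, Xᶜ ∈ N) (h1 : Set.univ ∉ N)
    {O : Set (Set U)} (hO : IsOrient N O) {X : Set U} (hX : X ∈ O)
    (hmin : ∀ A ∈ O, A ⊆ X → A = X) :
    IsOrient N (insert Xᶜ (O \ {X})) := by
  have hXN : X ∈ N := hO.1 hX
  have hXne : X ≠ Xᶜ := hO.ne_compl hX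
  have hXuniv : X ≠ Set.univ := fun h => h1 (h ▸ hXN)
  constructor
  · rintro Z hZ
    rcases (mem_insert_diff_iff Z).mp hZ with rfl | ⟨hZ, -⟩
    · exact hc X hXN
    · exact hO.1 hZ
  constructor
  · intro W hW
    rw [mem_insert_diff_iff, mem_insert_diff_iff]
    by_cases hWX : W = X
    · subst hWX
      constructor
      · rintro (h | ⟨-, h⟩)
        · exact absurd h hXne
        · exact absurd rfl h
      · intro h; exact absurd (Or.inl rfl) h
    · by_cases hWXc : W = Xᶜ
      · subst hWXc
        constructor
        · rintro - (h | ⟨-, h⟩)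
          · exact hXne ((compl_compl X).symm.trans h)
          · exact h (compl_compl X)
        · intro _; exact Or.inl rfl
      · have hWcXc : Wᶜ ≠ Xᶜ := fun h => hWX (compl_injective h)
        have hWcX : Wᶜ ≠ X := fun h => hWXc (by rw [← h, compl_compl])
        have hpair := hO.2.1 W hW
        constructor
        · rintro (h | ⟨hWO, -⟩)
          · exact absurd h hWXc
          · rintro (h' | ⟨hWcO, -⟩)
            · exact hWcXc h'
            · exact (hpair.mp hWO) hWcO
        · intro h
          refine Or.inr ⟨?_, hWX⟩
          by_contra hWO
          exact h (Or.inr ⟨hO.compl_not_mem hW hWO, hWcX⟩)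
  · rintro A hA Z hZ hAZ
    rw [mem_insert_diff_iff]
    rcases (mem_insert_diff_iff A).mp hA with rfl | ⟨hAO, hAX⟩
    · -- A = Xᶜ
      rcases hO.mem_or hZ with hZO | hZO
      · refine Or.inr ⟨hZO, fun hZX => ?_⟩
        have hsub : Xᶜ ⊆ X := hZX ▸ hAZ
        have hXc : Xᶜ = ∅ := by
          rw [← Set.subset_empty_iff]
          intro x hx
          exact absurd (hsub hx) hx
        exact hXuniv (by simpa [compl_empty_iff] using hXc)
      · have hZcX : Zᶜ ⊆ X := by
          rw [← compl_compl X]; exact compl_subset_compl.mpr hAZ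
        have hZc := hmin Zᶜ hZO hZcX
        left
        rw [← hZc, compl_compl]
    · have hZO : Z ∈ O := hO.2.2 A hAO Z hZ hAZ
      refine Or.inr ⟨hZO, ?_⟩
      rintro rfl
      exact hAX (hmin A hAO hAZ)

/-- The source of the edge swapping `X` is uniquely determined. -/
lemma Adjvia.val_eq (hnest : ∀ X ∈ N, ∀ Y ∈ N, X ⊆ Y ∨ X ⊆ Yᶜ ∨ Xᶜ ⊆ Y ∨ Xᶜ ⊆ Yᶜ)
    (hc : ∀ X ∈ N, Xᶜ ∈ N) {a b : OV N} {X : Set U} (h : Adjvia a b X) :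
    a.val = {Z | Z ∈ N ∧ (X ⊆ Z ∨ (Xᶜ ⊆ Z ∧ Z ≠ Xᶜ))} := by
  have hmin := h.minimal hc
  have hXN : X ∈ N := a.2.1 h.1
  ext Z
  constructor
  · intro hZ
    have hZN : Z ∈ N := a.2.1 hZ
    refine ⟨hZN, ?_⟩
    rcases hnest X hXN Z hZN with h4 | h4 | h4 | h4
    · exact Or.inl h4
    · exact absurd h4 (a.2.no_opp hc h.1 hZ)
    · refine Or.inr ⟨h4, ?_⟩
      rintro rfl
      exact a.2.not_both h.1 hZ
    · have hZX : Z ⊆ X := by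
        rw [← compl_compl Z, ← compl_compl X]
        exact compl_subset_compl.mpr h4
      exact Or.inl (le_of_eq (hmin Z hZ hZX).symm)
  · rintro ⟨hZN, hZ | ⟨hZ, hZne⟩⟩
    · exact a.2.2.2 X h.1 Z hZN hZ
    · rcases a.2.mem_or hZN with hZO | hZO
      · exact hZO
      · have hZcX : Zᶜ ⊆ X := by
          rw [← compl_compl X]
          exact compl_subset_compl.mpr hZ
        have hZc := hmin Zᶜ hZO hZcX
        exact absurd (by rw [← hZc, compl_compl]) hZne

lemma Adjvia.unique (hnest : ∀ X ∈ N, ∀ Y ∈ N, X ⊆ Y ∨ X ⊆ Yᶜ ∨ Xᶜ ⊆ Y ∨ Xᶜ ⊆ Yᶜ)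
    (hc : ∀ X ∈ N, Xᶜ ∈ N) {a b a' b' : OV N} {X : Set U}
    (h : Adjvia a b X) (h' : Adjvia a' b' X) : a = a' ∧ b = b' := by
  have hval : a.val = a'.val := by rw [h.val_eq hnest hc, h'.val_eq hnest hc]
  have ha : a = a' := Subtype.ext hval
  subst ha
  refine ⟨rfl, Subtype.ext ?_⟩
  rw [h.2, h'.2]


/-- Crossing an edge other than the `X`-edge does not change `X`-membership. -/
lemma cut_step (hnest : ∀ X ∈ N, ∀ Y ∈ N, X ⊆ Y ∨ X ⊆ Yᶜ ∨ Xᶜ ⊆ Y ∨ Xᶜ ⊆ Yᶜ)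
    (hc : ∀ X ∈ N, Xᶜ ∈ N) {c d : OV N} {X : Set U} (hcd : Adjvia c d X)
    {x y : OV N} (hxy : (TT N).Adj x y) (hne : s(x, y) ≠ s(c, d)) :
    (X ∈ x.val ↔ X ∈ y.val) := by
  obtain ⟨Y, hY⟩ := hxy
  by_cases h1 : Y = X
  · subst h1
    obtain ⟨ha, hb⟩ := hY.unique hnest hc hcd
    exact absurd (by rw [ha, hb]) hne
  by_cases h2 : Y = Xᶜ
  · subst h2
    have hY' := hY.symm
    rw [compl_compl] at hY'
    obtain ⟨ha, hb⟩ := hY'.unique hnest hc hcd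
    exact absurd (by rw [ha, hb, Sym2.eq_swap]) hne
  · exact hY.mem_iff (fun h => h1 h.symm) (fun h => h2 (by rw [h, compl_compl]))

/-- The `X`-edge is a cut: reachability avoiding it preserves `X`-membership. -/
lemma cut (hnest : ∀ X ∈ N, ∀ Y ∈ N, X ⊆ Y ∨ X ⊆ Yᶜ ∨ Xᶜ ⊆ Y ∨ Xᶜ ⊆ Yᶜ)
    (hc : ∀ X ∈ N, Xᶜ ∈ N) {c d : OV N} {X : Set U} (hcd : Adjvia c d X)
    {x y : OV N} (h : ((TT N).deleteEdges {s(c, d)}).Reachable x y) :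
    (X ∈ x.val ↔ X ∈ y.val) := by
  obtain ⟨w⟩ := h
  induction w with
  | nil => rfl
  | cons h p ih =>
    rw [SimpleGraph.deleteEdges_adj] at h
    have := cut_step hnest hc hcd h.1 (by simpa using h.2)
    exact this.trans ih

/-- Auxiliary graph: edges of `TT` that swap a pair belonging to `D`. -/
def HD (N D : Set (Set U)) : SimpleGraph (OV N) where
  Adj x y := (TT N).Adj x y ∧ ∃ Y ∈ D, ¬(Y ∈ x.val ↔ Y ∈ y.val)
  symm := ⟨by
    rintro x y ⟨h, Y, hY, hne⟩
    exact ⟨h.symm, Y, hY, fun hiff => hne hiff.symm⟩⟩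
  loopless := ⟨fun x h => (TT N).irrefl h.1⟩

lemma HD_le_TT {D : Set (Set U)} : HD N D ≤ TT N := fun _ _ h => h.1

lemma reach [Finite U] (hc : ∀ X ∈ N, Xᶜ ∈ N) (h1 : Set.univ ∉ N)
    (D : Set (Set U)) :
    ∀ (n : ℕ) (a b : OV N), (a.val \ b.val).ncard ≤ n → a.val \ b.val ⊆ D →
      (HD N D).Reachable a b := by
  intro n
  induction n with
  | zero =>
    intro a b hcard _
    have hfin : (a.val \ b.val).Finite := Set.toFinite _
    have : a.val \ b.val = ∅ := by
      rw [← Set.ncard_eq_zero hfin]; omega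
    have hsub : a.val ⊆ b.val := by rwa [Set.diff_eq_empty] at this
    have : a = b := Subtype.ext (a.2.eq_of_subset b.2 hsub)
    exact this ▸ SimpleGraph.Reachable.refl a
  | succ n ih =>
    intro a b hcard hD
    by_cases hab : a.val = b.val
    · exact (Subtype.ext hab : a = b) ▸ SimpleGraph.Reachable.refl a
    · have hne : (a.val \ b.val).Nonempty := by
        rw [Set.nonempty_iff_ne_empty]
        intro hemp
        rw [Set.diff_eq_empty] at hemp
        exact hab (a.2.eq_of_subset b.2 hemp)
      obtain ⟨X₀, hX₀mem, hX₀min⟩ :=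
        Set.exists_min_image (a.val \ b.val) Set.ncard (Set.toFinite _) hne
      have hX₀N : X₀ ∈ N := a.2.1 hX₀mem.1
      have hX₀cb : X₀ᶜ ∈ b.val := b.2.compl_not_mem hX₀N hX₀mem.2
      have hmin : ∀ A ∈ a.val, A ⊆ X₀ → A = X₀ := by
        intro A hA hAX
        by_contra hne'
        by_cases hAb : A ∈ b.val
        · exact b.2.no_opp hc hAb hX₀cb (by rw [compl_compl]; exact hAX)
        · have hmem : A ∈ a.val \ b.val := ⟨hA, hAb⟩
          have hle := hX₀min A hmem
          have hlt : A.ncard < X₀.ncard :=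
            Set.ncard_lt_ncard (ssubset_of_subset_of_ne hAX hne') (Set.toFinite _)
          omega
      set a' : OV N := ⟨insert X₀ᶜ (a.val \ {X₀}), swapOrient hc h1 a.2 hX₀mem.1 hmin⟩
        with ha'
      have hadj : Adjvia a a' X₀ := ⟨hX₀mem.1, rfl⟩
      have hX₀a' : X₀ ∉ a'.val := hadj.not_mem
      have hHD : (HD N D).Adj a a' :=
        ⟨⟨X₀, hadj⟩, X₀, hD hX₀mem, fun hiff => hX₀a' (hiff.mp hX₀mem.1)⟩
      have hsub : a'.val \ b.val ⊆ (a.val \ b.val) \ {X₀} := by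
        rintro Z ⟨hZ, hZb⟩
        rcases (mem_insert_diff_iff Z).mp hZ with rfl | ⟨hZa, hZX⟩
        · exact absurd hX₀cb hZb
        · exact ⟨⟨hZa, hZb⟩, hZX⟩
      have hcard' : (a'.val \ b.val).ncard ≤ n := by
        have h1' := Set.ncard_diff_singleton_lt_of_mem hX₀mem (Set.toFinite _)
        have h2' := Set.ncard_le_ncard hsub (Set.toFinite _)
        omega
      have hD' : a'.val \ b.val ⊆ D := fun Z hZ => hD (hsub hZ).1
      exact (hHD.reachable).trans (ih a' b hcard' hD')

lemma tt_preconnected [Finite U] (hc : ∀ X ∈ N, Xᶜ ∈ N) (h1 : Set.univ ∉ N) :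
    (TT N).Preconnected := fun a b =>
  (reach hc h1 Set.univ _ a b le_rfl (Set.subset_univ _)).mono HD_le_TT

lemma ov_nonempty (hc : ∀ X ∈ N, Xᶜ ∈ N) (h0 : (∅ : Set U) ∉ N) :
    Nonempty (OV N) := by
  by_cases h : Nonempty U
  · exact ⟨⟨{X | X ∈ N ∧ Classical.arbitrary U ∈ X}, ptOrient hc _⟩⟩
  · have hN : N = ∅ := by
      ext X
      simp only [Set.mem_empty_iff_false, iff_false]
      intro hX
      have : X = ∅ := by
        ext x; exact absurd ⟨x⟩ h
      exact h0 (this ▸ hX)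
    subst hN
    exact ⟨⟨∅, Set.empty_subset _, fun X hX => absurd hX (Set.notMem_empty X),
      fun A hA => absurd hA (Set.notMem_empty A)⟩⟩

lemma tt_acyclic [Finite U]
    (hnest : ∀ X ∈ N, ∀ Y ∈ N, X ⊆ Y ∨ X ⊆ Yᶜ ∨ Xᶜ ⊆ Y ∨ Xᶜ ⊆ Yᶜ)
    (hc : ∀ X ∈ N, Xᶜ ∈ N) : (TT N).IsAcyclic := by
  rw [SimpleGraph.isAcyclic_iff_forall_adj_isBridge]
  intro v w hvw
  rw [SimpleGraph.isBridge_iff]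
  intro hreach
  obtain ⟨X, hX⟩ := hvw
  have := cut hnest hc hX (hreach : ((TT N).deleteEdges {s(v, w)}).Reachable v w)
  exact hX.not_mem (this.mp hX.1)

lemma tt_isTree [Finite U]
    (hnest : ∀ X ∈ N, ∀ Y ∈ N, X ⊆ Y ∨ X ⊆ Yᶜ ∨ Xᶜ ⊆ Y ∨ Xᶜ ⊆ Yᶜ)
    (hc : ∀ X ∈ N, Xᶜ ∈ N) (h0 : (∅ : Set U) ∉ N) (h1 : Set.univ ∉ N) :
    (TT N).IsTree := by
  have : Nonempty (OV N) := ov_nonempty hc h0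
  exact ⟨⟨tt_preconnected hc h1⟩, tt_acyclic hnest hc⟩

/-- The bag of an orientation. -/
def bag (N : Set (Set U)) (O : OV N) : Set U :=
  {u | ∀ Z ∈ N, (u ∈ Z ↔ Z ∈ O.val)}

lemma bag_disjoint : Pairwise fun a b : OV N => Disjoint (bag N a) (bag N b) := by
  intro a b hab
  rw [Set.disjoint_left]
  intro u hua hub
  apply hab
  apply Subtype.ext
  ext Z
  by_cases hZ : Z ∈ N
  · rw [← hua Z hZ, hub Z hZ]
  · exact iff_of_false (fun h => hZ (a.2.1 h)) (fun h => hZ (b.2.1 h))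

lemma mem_bag_pt (hc : ∀ X ∈ N, Xᶜ ∈ N) (u : U) :
    u ∈ bag N ⟨{X | X ∈ N ∧ u ∈ X}, ptOrient hc u⟩ := by
  intro Z hZ
  simp only [Set.mem_setOf_eq]
  exact ⟨fun h => ⟨hZ, h⟩, fun h => h.2⟩

lemma bag_iUnion (hc : ∀ X ∈ N, Xᶜ ∈ N) : (⋃ v : OV N, bag N v) = Set.univ := by
  rw [Set.eq_univ_iff_forall]
  intro u
  exact Set.mem_iUnion.mpr ⟨_, mem_bag_pt hc u⟩

/-- The key computation: the side of the edge swapping `X` is exactly `Xᶜ`. -/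
lemma tset_eq [Finite U]
    (hnest : ∀ X ∈ N, ∀ Y ∈ N, X ⊆ Y ∨ X ⊆ Yᶜ ∨ Xᶜ ⊆ Y ∨ Xᶜ ⊆ Yᶜ)
    (hc : ∀ X ∈ N, Xᶜ ∈ N) (h1 : Set.univ ∉ N)
    {c d : OV N} {X : Set U} (hcd : Adjvia c d X) :
    tset (TT N) (bag N) c d = Xᶜ := by
  have hXN : X ∈ N := c.2.1 hcd.1
  have hXcN : Xᶜ ∈ N := hc X hXN
  apply Set.Subset.antisymm
  · intro u hu
    rw [tset, Set.mem_iUnion₂] at hu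
    obtain ⟨x, hx, hux⟩ := hu
    have hmem := cut hnest hc hcd hx
    have hXd : X ∉ d.val := hcd.not_mem
    have hXx : X ∉ x.val := fun h => hXd (hmem.mpr h)
    have hXcx : Xᶜ ∈ x.val := x.2.compl_not_mem hXN hXx
    exact (hux Xᶜ hXcN).mpr hXcx
  · intro u hu
    set x : OV N := ⟨{Z | Z ∈ N ∧ u ∈ Z}, ptOrient hc u⟩ with hx
    have hux : u ∈ bag N x := mem_bag_pt hc u
    have hXd : X ∉ d.val := hcd.not_mem
    have hXcx : Xᶜ ∈ x.val := ⟨hXcN, hu⟩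
    have hdiff : d.val \ x.val ⊆ {Y | Y ≠ X ∧ Y ≠ Xᶜ} := by
      rintro Z ⟨hZd, hZx⟩
      constructor
      · rintro rfl; exact hXd hZd
      · rintro rfl; exact hZx hXcx
    have hreach : (HD N {Y | Y ≠ X ∧ Y ≠ Xᶜ}).Reachable d x :=
      reach hc h1 _ _ d x le_rfl hdiff
    have hle : HD N {Y | Y ≠ X ∧ Y ≠ Xᶜ} ≤ (TT N).deleteEdges {s(c, d)} := by
      rintro p q ⟨hpq, Y, ⟨hY1, hY2⟩, hYne⟩
      rw [SimpleGraph.deleteEdges_adj]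
      refine ⟨hpq, ?_⟩
      simp only [Set.mem_singleton_iff]
      intro he
      rcases Sym2.eq_iff.mp he with ⟨hp, hq⟩ | ⟨hp, hq⟩
      · subst hp; subst hq
        exact hYne (hcd.mem_iff hY1 hY2)
      · subst hp; subst hq
        exact hYne (hcd.mem_iff hY1 hY2).symm
    rw [tset, Set.mem_iUnion₂]
    exact ⟨x, hreach.mono hle, hux⟩

/-- The canonical orientation at the edge of `X`: the one pointing at `X`'s side. -/
def canO (N : Set (Set U)) (X : Set U) : Set (Set U) :=
  {Z | Z ∈ N ∧ (X ⊆ Z ∨ (Xᶜ ⊆ Z ∧ Z ≠ Xᶜ))}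

lemma canO_orient (hnest : ∀ X ∈ N, ∀ Y ∈ N, X ⊆ Y ∨ X ⊆ Yᶜ ∨ Xᶜ ⊆ Y ∨ Xᶜ ⊆ Yᶜ)
    (hc : ∀ X ∈ N, Xᶜ ∈ N) (h0 : (∅ : Set U) ∉ N) (h1 : Set.univ ∉ N)
    {X : Set U} (hX : X ∈ N) :
    IsOrient N (canO N X) := by
  have hX0 : X ≠ ∅ := fun h => h0 (h ▸ hX)
  have hX1 : X ≠ Set.univ := fun h => h1 (h ▸ hX)
  refine ⟨fun Z hZ => hZ.1, ?_, ?_⟩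
  · intro W hW
    constructor
    · rintro ⟨-, hP⟩ ⟨-, hP'⟩
      rcases hP with h | ⟨h, hne⟩
      · rcases hP' with h' | ⟨h', hne'⟩
        · apply hX0
          rw [← Set.subset_empty_iff]
          intro x hx
          exact absurd (h hx) (h' hx)
        · have hWX : W ⊆ X := by
            rw [← compl_compl W, ← compl_compl X]
            exact compl_subset_compl.mpr h'
          exact hne' (by rw [Set.Subset.antisymm h hWX])
      · rcases hP' with h' | ⟨h', hne'⟩
        · have hWXc : W ⊆ Xᶜ := Set.subset_compl_comm.mp h'
          exact hne (Set.Subset.antisymm hWXc h)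
        · apply hX1
          rw [← compl_empty_iff, ← Set.subset_empty_iff]
          intro x hx
          exact absurd (h hx) (h' hx)
    · intro hnP
      have hnP' : ¬(X ⊆ Wᶜ ∨ (Xᶜ ⊆ Wᶜ ∧ Wᶜ ≠ Xᶜ)) := fun hp => hnP ⟨hc W hW, hp⟩
      push_neg at hnP'
      obtain ⟨hn1, hn2⟩ := hnP'
      refine ⟨hW, ?_⟩
      rcases hnest X hX W hW with h | h | h | h
      · exact Or.inl h
      · exact absurd h hn1
      · by_cases hWXc : W = Xᶜ
        · exfalso
          apply hn1
          rw [hWXc, compl_compl]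
        · exact Or.inr ⟨h, hWXc⟩
      · have hW' : W = X := compl_injective (hn2 h)
        exact Or.inl (le_of_eq hW'.symm)
  · rintro Z ⟨hZN, hZP⟩ W hW hZW
    refine ⟨hW, ?_⟩
    rcases hZP with h | ⟨h, hne⟩
    · exact Or.inl (h.trans hZW)
    · refine Or.inr ⟨h.trans hZW, ?_⟩
      rintro rfl
      exact hne (Set.Subset.antisymm hZW h)

lemma canO_mem {X : Set U} (hX : X ∈ N) : X ∈ canO N X :=
  ⟨hX, Or.inl (Set.Subset.refl X)⟩

lemma canO_min (h1 : Set.univ ∉ N) {X : Set U} (hX : X ∈ N) :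
    ∀ A ∈ canO N X, A ⊆ X → A = X := by
  rintro A ⟨hAN, hP⟩ hAX
  rcases hP with h | ⟨h, -⟩
  · exact Set.Subset.antisymm hAX h
  · exfalso
    apply h1
    have hXc : Xᶜ = ∅ := by
      rw [← Set.subset_empty_iff]
      intro x hx
      exact absurd (hAX (h hx)) hx
    exact compl_empty_iff.mp hXc ▸ hX

/-- The core theorem: for `N` nested, complement-closed, without `∅` and `univ`,
the structure tree displays exactly `N`. -/
theorem core [Finite U]
    (hnest : ∀ X ∈ N, ∀ Y ∈ N, X ⊆ Y ∨ X ⊆ Yᶜ ∨ Xᶜ ⊆ Y ∨ Xᶜ ⊆ Yᶜ)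
    (hc : ∀ X ∈ N, Xᶜ ∈ N) (h0 : (∅ : Set U) ∉ N) (h1 : Set.univ ∉ N) :
    (TT N).IsTree ∧
    (Pairwise fun a b : OV N => Disjoint (bag N a) (bag N b)) ∧
    (⋃ v : OV N, bag N v) = Set.univ ∧
    N = {Z : Set U | ∃ a b : OV N, (TT N).Adj a b ∧ Z = tset (TT N) (bag N) a b} := by
  refine ⟨tt_isTree hnest hc h0 h1, bag_disjoint, bag_iUnion hc, ?_⟩
  ext X
  constructor
  · intro hX
    have hXc : Xᶜ ∈ N := hc X hX
    have hor := canO_orient hnest hc h0 h1 hXc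
    have hmem : Xᶜ ∈ canO N Xᶜ := canO_mem hXc
    have hmin := canO_min h1 hXc
    set c : OV N := ⟨canO N Xᶜ, hor⟩ with hcdef
    set d : OV N := ⟨insert Xᶜᶜ (canO N Xᶜ \ {Xᶜ}), swapOrient hc h1 hor hmem hmin⟩
      with hddef
    have hadj : Adjvia c d Xᶜ := ⟨hmem, rfl⟩
    refine ⟨c, d, ⟨Xᶜ, hadj⟩, ?_⟩
    rw [tset_eq hnest hc h1 hadj, compl_compl]
  · rintro ⟨a, b, ⟨Y, hY⟩, rfl⟩
    rw [tset_eq hnest hc h1 hY]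
    exact hc Y (a.2.1 hY.1)

section Transport

variable {V' W' : Type*} (e : V' ≃ W') (T : SimpleGraph V')

/-- Transport a graph along an equivalence. -/
def Tmap : SimpleGraph W' where
  Adj x y := T.Adj (e.symm x) (e.symm y)
  symm := ⟨fun _ _ h => T.adj_symm h⟩
  loopless := ⟨fun _ h => T.irrefl h⟩

lemma tmap_adj {a b : V'} : (Tmap e T).Adj (e a) (e b) ↔ T.Adj a b := by
  simp [Tmap]

lemma sym2_eq_of_symm {a b : V'} {p q : W'}
    (h : s(e.symm p, e.symm q) = s(a, b)) : s(p, q) = s(e a, e b) := by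
  have h2 := congrArg (Sym2.map e) h
  simpa using h2

lemma sym2_eq_of_app {a b : V'} {p q : V'}
    (h : s(e p, e q) = s(e a, e b)) : s(p, q) = s(a, b) := by
  have h2 := congrArg (Sym2.map e.symm) h
  simpa using h2

/-- Forward hom between edge-deleted graphs. -/
def homToTmapDel (a b : V') :
    (T.deleteEdges {s(a, b)}) →g ((Tmap e T).deleteEdges {s(e a, e b)}) where
  toFun := e
  map_rel' := by
    intro p q h
    rw [SimpleGraph.deleteEdges_adj] at h ⊢
    refine ⟨(tmap_adj e T).mpr h.1, ?_⟩
    simp only [Set.mem_singleton_iff] at h ⊢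
    intro he
    exact h.2 (sym2_eq_of_app e he)

/-- Backward hom between edge-deleted graphs. -/
def homFromTmapDel (a b : V') :
    ((Tmap e T).deleteEdges {s(e a, e b)}) →g (T.deleteEdges {s(a, b)}) where
  toFun := e.symm
  map_rel' := by
    intro p q h
    rw [SimpleGraph.deleteEdges_adj] at h ⊢
    refine ⟨h.1, ?_⟩
    simp only [Set.mem_singleton_iff] at h ⊢
    intro he
    exact h.2 (sym2_eq_of_symm e he)

lemma tmap_connected (h : T.Connected) : (Tmap e T).Connected := by
  have : Nonempty W' := Nonempty.map e h.nonempty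
  refine ⟨fun x y => ?_⟩
  have hr := h.preconnected (e.symm x) (e.symm y)
  have := hr.map (⟨e, fun {p q} h => (tmap_adj e T).mpr h⟩ : T →g Tmap e T)
  have h2 : (Tmap e T).Reachable (e (e.symm x)) (e (e.symm y)) := this
  simpa using h2

lemma tmap_acyclic (h : T.IsAcyclic) : (Tmap e T).IsAcyclic := by
  rw [SimpleGraph.isAcyclic_iff_forall_adj_isBridge] at h ⊢
  intro x y hxy
  obtain ⟨a, rfl⟩ : ∃ a, x = e a := ⟨e.symm x, (e.apply_symm_apply x).symm⟩
  obtain ⟨b, rfl⟩ : ∃ b, y = e b := ⟨e.symm y, (e.apply_symm_apply y).symm⟩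
  rw [SimpleGraph.isBridge_iff]
  have hT : T.Adj a b := (tmap_adj e T).mp hxy
  intro hre
  have hb := h hT
  rw [SimpleGraph.isBridge_iff] at hb
  apply hb
  have := SimpleGraph.Reachable.map (homFromTmapDel e T a b)
    (hre : ((Tmap e T).deleteEdges {s(e a, e b)}).Reachable (e a) (e b))
  have h2 : (T.deleteEdges {s(a, b)}).Reachable (e.symm (e a)) (e.symm (e b)) := this
  simpa using h2

lemma tmap_isTree (h : T.IsTree) : (Tmap e T).IsTree :=
  ⟨tmap_connected e T h.isConnected, tmap_acyclic e T h.IsAcyclic⟩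

lemma tset_tmap {U' : Type*} (β : V' → Set U') (a b : V') :
    tset (Tmap e T) (fun w => β (e.symm w)) (e a) (e b) = tset T β a b := by
  ext u
  simp only [tset, Set.mem_iUnion₂, Set.mem_setOf_eq]
  constructor
  · rintro ⟨x, hx, hux⟩
    refine ⟨e.symm x, ?_, hux⟩
    have := SimpleGraph.Reachable.map (homFromTmapDel e T a b) hx
    have h2 : (T.deleteEdges {s(a, b)}).Reachable (e.symm (e b)) (e.symm x) := this
    simpa using h2
  · rintro ⟨v, hv, huv⟩
    refine ⟨e v, ?_, by simpa using huv⟩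
    have := SimpleGraph.Reachable.map (homToTmapDel e T a b) hv
    exact this

end Transport

lemma tset_preimage {V' U1 U2 : Type*} (f : U1 → U2) (T : SimpleGraph V')
    (β : V' → Set U2) (a b : V') :
    tset T (fun v => f ⁻¹' β v) a b = f ⁻¹' tset T β a b := by
  ext u
  simp [tset]

section OptionEmbed

variable (u0 : U)

/-- Which side of a pair receives the extra point. -/
def sigma' (X : Set U) : Prop := X = ∅ ∨ (X ≠ Set.univ ∧ u0 ∈ X)

/-- Embed a subset of `U` into `Option U`, possibly adding the extra point. -/
def iota (X : Set U) : Set (Option U) :=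
  {y | (∃ x ∈ X, y = some x) ∨ (y = none ∧ sigma' u0 X)}

lemma some_mem_iota {X : Set U} {x : U} : some x ∈ iota u0 X ↔ x ∈ X := by
  simp [iota]

lemma none_mem_iota {X : Set U} : none ∈ iota u0 X ↔ sigma' u0 X := by
  simp [iota]

lemma sigma'_compl {X : Set U} : sigma' u0 Xᶜ ↔ ¬ sigma' u0 X := by
  constructor
  · rintro (h | ⟨h1, h2⟩)
    · have hX : X = Set.univ := by
        rwa [compl_empty_iff] at h
      subst hX
      have hne : Nonempty U := ⟨u0⟩
      rintro (h' | ⟨h1', -⟩)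
      · exact absurd h'.symm (Set.empty_ne_univ)
      · exact h1' rfl
    · rintro (h' | ⟨-, h2'⟩)
      · exact h1 (by rw [h', compl_empty])
      · exact h2 h2'
  · intro h
    by_cases hX1 : X = Set.univ
    · subst hX1; exact Or.inl (by simp)
    · by_cases hX0 : X = ∅
      · exact absurd (Or.inl hX0) h
      · refine Or.inr ⟨?_, ?_⟩
        · intro hcu
          apply hX0
          have h3 := congrArg compl hcu
          rwa [compl_compl, compl_univ] at h3
        · intro hu
          exact h (Or.inr ⟨hX1, hu⟩)

lemma iota_compl {X : Set U} : (iota u0 X)ᶜ = iota u0 Xᶜ := by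
  ext y
  cases y with
  | none =>
    simp only [Set.mem_compl_iff, none_mem_iota]
    exact (sigma'_compl u0).symm
  | some x =>
    simp only [Set.mem_compl_iff, some_mem_iota]

lemma iota_preimage {X : Set U} : some ⁻¹' (iota u0 X) = X := by
  ext x
  simp [iota]

lemma iota_injOn {X Y : Set U} (h : iota u0 X = iota u0 Y) : X = Y := by
  rw [← iota_preimage u0 (X := X), ← iota_preimage u0 (X := Y), h]

lemma iota_mono {X Y : Set U} (hX0 : X ≠ ∅) (hY1 : Y ≠ Set.univ)
    (h : X ⊆ Y) : iota u0 X ⊆ iota u0 Y := by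
  rintro y (⟨x, hx, rfl⟩ | ⟨rfl, hs⟩)
  · exact Or.inl ⟨x, h hx, rfl⟩
  · refine Or.inr ⟨rfl, ?_⟩
    rcases hs with h0 | ⟨-, hu⟩
    · exact absurd h0 hX0
    · exact Or.inr ⟨hY1, h hu⟩

lemma iota_ne_empty {X : Set U} : iota u0 X ≠ ∅ := by
  by_cases h : X = ∅
  · subst h
    intro hc
    have : none ∈ iota u0 (∅ : Set U) := (none_mem_iota u0).mpr (Or.inl rfl)
    rw [hc] at this
    exact this
  · obtain ⟨x, hx⟩ := Set.nonempty_iff_ne_empty.mpr h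
    intro hc
    have : some x ∈ iota u0 X := (some_mem_iota u0).mpr hx
    rw [hc] at this
    exact this

lemma iota_ne_univ {X : Set U} : iota u0 X ≠ Set.univ := by
  intro h
  have : (iota u0 X)ᶜ = ∅ := by rw [h, compl_univ]
  rw [iota_compl] at this
  exact iota_ne_empty u0 this

end OptionEmbed

section Nested
variable (u0 : U)

lemma iota_empty_subset {S : Set (Option U)} (hn : none ∈ S) : iota u0 ∅ ⊆ S := by
  rintro y (⟨x, hx, rfl⟩ | ⟨rfl, -⟩)
  · exact absurd hx (Set.notMem_empty x)
  · exact hn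

lemma subset_iota_univ {X : Set U} (h : ¬ sigma' u0 X) :
    iota u0 X ⊆ iota u0 Set.univ := by
  rintro y (⟨x, -, rfl⟩ | ⟨rfl, hs⟩)
  · exact Or.inl ⟨x, Set.mem_univ x, rfl⟩
  · exact absurd hs h

lemma iota_nested {X Y : Set U}
    (hXY : X ⊆ Y ∨ X ⊆ Yᶜ ∨ Xᶜ ⊆ Y ∨ Xᶜ ⊆ Yᶜ) :
    iota u0 X ⊆ iota u0 Y ∨ iota u0 X ⊆ (iota u0 Y)ᶜ ∨
      (iota u0 X)ᶜ ⊆ iota u0 Y ∨ (iota u0 X)ᶜ ⊆ (iota u0 Y)ᶜ := by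
  by_cases hX0 : X = ∅
  · subst hX0
    by_cases hsY : sigma' u0 Y
    · exact Or.inl (iota_empty_subset u0 ((none_mem_iota u0).mpr hsY))
    · refine Or.inr (Or.inl ?_)
      rw [iota_compl]
      exact iota_empty_subset u0 ((none_mem_iota u0).mpr ((sigma'_compl u0).mpr hsY))
  by_cases hX1 : X = Set.univ
  · subst hX1
    by_cases hsY : sigma' u0 Y
    · refine Or.inr (Or.inr (Or.inl ?_))
      rw [iota_compl, compl_univ]
      exact iota_empty_subset u0 ((none_mem_iota u0).mpr hsY)
    · refine Or.inr (Or.inr (Or.inr ?_))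
      rw [iota_compl, compl_univ, iota_compl]
      exact iota_empty_subset u0 ((none_mem_iota u0).mpr ((sigma'_compl u0).mpr hsY))
  by_cases hY0 : Y = ∅
  · subst hY0
    by_cases hsX : sigma' u0 X
    · refine Or.inr (Or.inr (Or.inr ?_))
      rw [iota_compl, iota_compl, compl_empty]
      exact subset_iota_univ u0 (by rw [sigma'_compl]; exact fun h => h hsX)
    · refine Or.inr (Or.inl ?_)
      rw [iota_compl, compl_empty]
      exact subset_iota_univ u0 hsX
  by_cases hY1 : Y = Set.univ
  · subst hY1
    by_cases hsX : sigma' u0 X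
    · refine Or.inr (Or.inr (Or.inl ?_))
      rw [iota_compl]
      exact subset_iota_univ u0 (by rw [sigma'_compl]; exact fun h => h hsX)
    · exact Or.inl (subset_iota_univ u0 hsX)
  · have hXc0 : Xᶜ ≠ ∅ := fun h => hX1 (by rw [← compl_compl X, h, compl_empty])
    have hYc1 : Yᶜ ≠ Set.univ := fun h => hY0 (by rw [← compl_compl Y, h, compl_univ])
    rcases hXY with h | h | h | h
    · exact Or.inl (iota_mono u0 hX0 hY1 h)
    · refine Or.inr (Or.inl ?_)
      rw [iota_compl]
      exact iota_mono u0 hX0 hYc1 h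
    · refine Or.inr (Or.inr (Or.inl ?_))
      rw [iota_compl]
      exact iota_mono u0 hXc0 hY1 h
    · refine Or.inr (Or.inr (Or.inr ?_))
      rw [iota_compl, iota_compl]
      exact iota_mono u0 hXc0 hYc1 h

end Nested

instance ovFinite [Finite U] : Finite (OV N) := by
  unfold OV
  exact Subtype.finite

/-- Shrink a tree decomposition over an arbitrary finite vertex type to `Fin n`. -/
lemma shrink {V0 : Type*} [Finite V0] {T0 : SimpleGraph V0} {β0 : V0 → Set U}
    (ht : T0.IsTree) (hd : Pairwise fun a b : V0 => Disjoint (β0 a) (β0 b))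
    (hu : (⋃ v : V0, β0 v) = Set.univ)
    (hN : N = {Z : Set U | ∃ a b : V0, T0.Adj a b ∧ Z = tset T0 β0 a b}) :
    ∃ (V : Type) (_ : Fintype V) (T : SimpleGraph V) (β : V → Set U),
      T.IsTree ∧
      (Pairwise fun a b : V => Disjoint (β a) (β b)) ∧
      (⋃ v : V, β v) = Set.univ ∧
      N = {Z : Set U | ∃ a b : V, T.Adj a b ∧ Z = tset T β a b} := by
  have : Fintype V0 := Fintype.ofFinite V0
  set e := Fintype.equivFin V0 with he
  refine ⟨Fin (Fintype.card V0), inferInstance, Tmap e T0, fun w => β0 (e.symm w),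
    tmap_isTree e T0 ht, ?_, ?_, ?_⟩
  · intro a b hne
    exact hd (e.symm.injective.ne hne)
  · ext u
    simp only [Set.mem_iUnion]
    constructor
    · rintro ⟨w, hw⟩
      exact hu ▸ Set.mem_univ u
    · intro _
      have : u ∈ ⋃ v : V0, β0 v := hu ▸ Set.mem_univ u
      obtain ⟨v, hv⟩ := Set.mem_iUnion.mp this
      exact ⟨e v, by simpa using hv⟩
  · rw [hN]
    ext Z
    constructor
    · rintro ⟨a, b, hadj, rfl⟩
      exact ⟨e a, e b, (tmap_adj e T0).mpr hadj, (tset_tmap e T0 β0 a b).symm⟩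
    · rintro ⟨x, y, hadj, rfl⟩
      obtain ⟨a, rfl⟩ : ∃ a, x = e a := ⟨e.symm x, (e.apply_symm_apply x).symm⟩
      obtain ⟨b, rfl⟩ : ∃ b, y = e b := ⟨e.symm y, (e.apply_symm_apply y).symm⟩
      exact ⟨a, b, (tmap_adj e T0).mp hadj, tset_tmap e T0 β0 a b⟩

/-- Main theorem, general version proved inside the namespace. -/
theorem main {U : Type*} [Fintype U] (N : Set (Set U))
    (hnest : ∀ X ∈ N, ∀ Y ∈ N, X ⊆ Y ∨ X ⊆ Yᶜ ∨ Xᶜ ⊆ Y ∨ Xᶜ ⊆ Yᶜ)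
    (hcompl : ∀ X ∈ N, Xᶜ ∈ N) :
    ∃ (V : Type) (_ : Fintype V) (T : SimpleGraph V) (β : V → Set U),
      T.IsTree ∧
      (Pairwise fun a b : V => Disjoint (β a) (β b)) ∧
      (⋃ v : V, β v) = Set.univ ∧
      N = {Z : Set U | ∃ a b : V, T.Adj a b ∧ Z = tset T β a b} := by
  classical
  by_cases hU : Nonempty U
  · obtain ⟨u0⟩ := hU
    set N' : Set (Set (Option U)) := (iota u0) '' N with hN'def
    have hnest' : ∀ Z ∈ N', ∀ W ∈ N', Z ⊆ W ∨ Z ⊆ Wᶜ ∨ Zᶜ ⊆ W ∨ Zᶜ ⊆ Wᶜ := by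
      rintro _ ⟨X, hX, rfl⟩ _ ⟨Y, hY, rfl⟩
      exact iota_nested u0 (hnest X hX Y hY)
    have hc' : ∀ Z ∈ N', Zᶜ ∈ N' := by
      rintro _ ⟨X, hX, rfl⟩
      exact ⟨Xᶜ, hcompl X hX, (iota_compl u0).symm⟩
    have h0' : (∅ : Set (Option U)) ∉ N' := by
      rintro ⟨X, -, h⟩
      exact iota_ne_empty u0 h
    have h1' : (Set.univ : Set (Option U)) ∉ N' := by
      rintro ⟨X, -, h⟩
      exact iota_ne_univ u0 h
    obtain ⟨htree, hdisj, hunion, htsets⟩ := core hnest' hc' h0' h1'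
    set β1 : OV N' → Set U := fun v => some ⁻¹' bag N' v with hβ1
    have hd1 : Pairwise fun a b : OV N' => Disjoint (β1 a) (β1 b) :=
      fun a b h => Disjoint.preimage _ (hdisj h)
    have hu1 : (⋃ v : OV N', β1 v) = Set.univ := by
      have : (⋃ v : OV N', β1 v) = some ⁻¹' (⋃ v : OV N', bag N' v) := by
        rw [Set.preimage_iUnion]
      rw [this, hunion, Set.preimage_univ]
    have hts1 : N = {Z : Set U | ∃ a b : OV N',
        (TT N').Adj a b ∧ Z = tset (TT N') β1 a b} := by
      ext Z
      constructor
      · intro hZ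
        have hmem : iota u0 Z ∈ N' := ⟨Z, hZ, rfl⟩
        rw [htsets] at hmem
        obtain ⟨a, b, hadj, heq⟩ := hmem
        refine ⟨a, b, hadj, ?_⟩
        rw [hβ1, tset_preimage, ← heq, iota_preimage]
      · rintro ⟨a, b, hadj, rfl⟩
        have hmem : tset (TT N') (bag N') a b ∈ N' :=
          (Set.ext_iff.mp htsets _).mpr ⟨a, b, hadj, rfl⟩
        obtain ⟨X, hX, hXeq⟩ := hmem
        have heq2 : tset (TT N') β1 a b = X := by
          rw [hβ1, tset_preimage, ← hXeq, iota_preimage]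
        rw [heq2]; exact hX
    exact shrink htree hd1 hu1 hts1
  · have hE : IsEmpty U := not_nonempty_iff.mp hU
    have hsub : ∀ X : Set U, X = ∅ := fun X => by ext x; exact isEmptyElim x
    by_cases hN : N = ∅
    · refine ⟨Fin 1, inferInstance, ⊥, fun _ => ∅, ?_, ?_, ?_, ?_⟩
      · exact ⟨⟨fun x y => by rw [Subsingleton.elim x y]⟩, SimpleGraph.isAcyclic_bot⟩
      · intro a b _; simp
      · ext x; exact isEmptyElim x
      · rw [hN]
        ext Z
        simp only [Set.mem_empty_iff_false, false_iff, Set.mem_setOf_eq]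
        rintro ⟨a, b, hadj, -⟩
        exact hadj
    · have hNe : N = {∅} := by
        ext Z
        simp only [Set.mem_singleton_iff]
        constructor
        · intro _; exact hsub Z
        · rintro rfl
          obtain ⟨X0, hX0⟩ := Set.nonempty_iff_ne_empty.mpr hN
          exact (hsub X0) ▸ hX0
      refine ⟨Fin 2, inferInstance, ⊤, fun _ => ∅, ?_, ?_, ?_, ?_⟩
      · constructor
        · refine ⟨fun x y => ?_⟩
          by_cases hxy : x = y
          · rw [hxy]
          · exact ((SimpleGraph.top_adj _ _).mpr hxy).reachable
        · rw [SimpleGraph.isAcyclic_iff_forall_adj_isBridge]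
          intro v w hvw
          rw [SimpleGraph.isBridge_iff]
          intro hre
          have key : ∀ p q v w : Fin 2, p ≠ q → v ≠ w → s(p, q) = s(v, w) := by decide
          have hdel : (⊤ : SimpleGraph (Fin 2)).deleteEdges {s(v, w)} ≤ ⊥ := by
            intro p q h
            rw [SimpleGraph.deleteEdges_adj] at h
            exact absurd (key p q v w ((SimpleGraph.top_adj _ _).mp h.1) hvw.ne)
              (by simpa using h.2)
          have := (hre : ((⊤ : SimpleGraph (Fin 2)).deleteEdges {s(v, w)}).Reachable v w).mono hdel
          exact hvw.ne (SimpleGraph.reachable_bot.mp this)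
      · intro a b _; simp
      · ext x; exact isEmptyElim x
      · rw [hNe]
        ext Z
        simp only [Set.mem_singleton_iff, Set.mem_setOf_eq]
        constructor
        · rintro rfl
          exact ⟨0, 1, (SimpleGraph.top_adj _ _).mpr (by decide), (hsub _).symm⟩
        · rintro ⟨a, b, -, rfl⟩
          exact hsub _

end NTD

/-- Every nested, complementation-closed family of separations is the set of
separations of a tree decomposition. -/
theorem nested_family_tree_decomposition {U : Type*} [Fintype U] (N : Set (Set U))
    (hnest : ∀ X ∈ N, ∀ Y ∈ N, X ⊆ Y ∨ X ⊆ Yᶜ ∨ Xᶜ ⊆ Y ∨ Xᶜ ⊆ Yᶜ)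
    (hcompl : ∀ X ∈ N, Xᶜ ∈ N) :
    ∃ (V : Type) (_ : Fintype V) (T : SimpleGraph V) (β : V → Set U),
      T.IsTree ∧
      (Pairwise fun a b : V => Disjoint (β a) (β b)) ∧
      (⋃ v : V, β v) = Set.univ ∧
      N = {Z : Set U | ∃ a b : V, T.Adj a b ∧ Z = tset T β a b} :=
  NTD.main N hnest hcompl
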